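/- arXiv:1603.01546 — 3 statements merged into one kernel-verified Lean document; each statement's English description precedes it below -/
import Mathlib

section
/- Let ρ, S, X be d×d complex matrices with ρ Hermitian positive semidefinite, and let β, ω be real numbers such that ρ·S = e^{βω}·(S·ρ). Define L(X) = ½(S†·[X,S] + [S†,X]·S) + ½e^{−βω}·(S·[X,S†] + [S,X]·S†). Then −trace(ρ·X†·L(X)) is a nonnegative real number. Consequently, any nonnegative linear combination Σ_{α,ω} h_α(ω)·L_{α,ω} of such terms (with h_α(ω) ≥ 0) satisfies −⟨X, L(X)⟩_β := −trace(ρ·X†·L(X)) ≥ 0 for every X. -/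
open Matrix
open scoped ComplexOrder

/-- One `(α, ω)`-term of the Davies–Lindblad generator in the Heisenberg picture:
`L(X) = ½(S†[X,S] + [S†,X]S) + ½e^{−βω}(S[X,S†] + [S,X]S†)`, where `c = e^{−βω}`. -/
noncomputable def lindbladTerm {d : ℕ} (S : Matrix (Fin d) (Fin d) ℂ) (c : ℂ)
    (X : Matrix (Fin d) (Fin d) ℂ) : Matrix (Fin d) (Fin d) ℂ :=
  (2⁻¹ : ℂ) • (Sᴴ * (X * S - S * X) + (Sᴴ * X - X * Sᴴ) * S) +
    ((2⁻¹ : ℂ) * c) • (S * (X * Sᴴ - Sᴴ * X) + (S * X - X * S) * Sᴴ)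


private lemma psd_trace_nonneg {d : ℕ} {M : Matrix (Fin d) (Fin d) ℂ} (hM : M.PosSemidef) :
    0 ≤ M.trace := by
  rw [Matrix.trace]
  apply Finset.sum_nonneg
  intro i _
  exact hM.diag_nonneg

private lemma key_term {d : ℕ} (ρ S X : Matrix (Fin d) (Fin d) ℂ)
    (hρ : ρ.PosSemidef) (β ω : ℝ)
    (hKMS : ρ * S = (Real.exp (β * ω) : ℂ) • (S * ρ)) :
    ∃ r : ℝ, 0 ≤ r ∧
      -Matrix.trace (ρ * Xᴴ * lindbladTerm S (Real.exp (-(β * ω))) X) = (r : ℂ) := by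
  set e : ℂ := (Real.exp (β * ω) : ℂ) with he
  set c : ℂ := (Real.exp (-(β * ω)) : ℂ) with hc
  have hce : c * e = 1 := by
    rw [hc, he, ← Complex.ofReal_mul, ← Real.exp_add, neg_add_cancel, Real.exp_zero,
      Complex.ofReal_one]
  have hρh : ρᴴ = ρ := hρ.1
  have h2 : Sᴴ * ρ = e • (ρ * Sᴴ) := by
    have h := congrArg conjTranspose hKMS
    rw [conjTranspose_mul, conjTranspose_smul, conjTranspose_mul, hρh] at h
    rw [h, he, Complex.star_def, Complex.conj_ofReal]
  have hρSd : ρ * Sᴴ = c • (Sᴴ * ρ) := by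
    rw [h2, smul_smul, hce, one_smul]
  have HS : ∀ M : Matrix (Fin d) (Fin d) ℂ,
      Matrix.trace (ρ * (S * M)) = e * Matrix.trace (ρ * (M * S)) := by
    intro M
    rw [← Matrix.mul_assoc, hKMS, Matrix.smul_mul, trace_smul, smul_eq_mul,
      Matrix.mul_assoc, Matrix.trace_mul_comm S (ρ * M), Matrix.mul_assoc]
  have HSd : ∀ M : Matrix (Fin d) (Fin d) ℂ,
      Matrix.trace (ρ * (Sᴴ * M)) = c * Matrix.trace (ρ * (M * Sᴴ)) := by
    intro M
    rw [← Matrix.mul_assoc, hρSd, Matrix.smul_mul, trace_smul, smul_eq_mul,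
      Matrix.mul_assoc, Matrix.trace_mul_comm Sᴴ (ρ * M), Matrix.mul_assoc]
  set A : Matrix (Fin d) (Fin d) ℂ := X * S - S * X with hA
  set B : Matrix (Fin d) (Fin d) ℂ := X * Sᴴ - Sᴴ * X with hB
  have E1 := HSd (Xᴴ * (X * S))
  have E2 := HS (Xᴴ * (Sᴴ * X))
  have E3 := HSd (Xᴴ * (S * X))
  have E4 := HS (Xᴴ * (X * Sᴴ))
  have hid : -Matrix.trace (ρ * Xᴴ * lindbladTerm S c X) =
      (2⁻¹ : ℂ) * Matrix.trace (ρ * (Aᴴ * A)) + c * 2⁻¹ * Matrix.trace (ρ * (Bᴴ * B)) := by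
    simp only [lindbladTerm, hA, hB, conjTranspose_sub, conjTranspose_mul,
      conjTranspose_conjTranspose, Matrix.mul_sub, Matrix.sub_mul, Matrix.mul_add,
      Matrix.add_mul, Matrix.smul_mul, Matrix.mul_smul, trace_add, trace_sub, trace_smul,
      smul_eq_mul, Matrix.mul_assoc] at E1 E2 E3 E4 ⊢
    linear_combination (-(2⁻¹ : ℂ)) * E1 + (2⁻¹ : ℂ) * E3 + c * 2⁻¹ * E2 - c * 2⁻¹ * E4 +
      (2⁻¹ * Matrix.trace (ρ * (Xᴴ * (Sᴴ * (X * S)))) -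
       2⁻¹ * Matrix.trace (ρ * (Xᴴ * (X * (Sᴴ * S))))) * hce
  -- positivity of the two pieces
  have hAtr : Matrix.trace (ρ * (Aᴴ * A)) = Matrix.trace (A * ρ * Aᴴ) := by
    rw [← Matrix.mul_assoc, Matrix.trace_mul_cycle]
  have hBtr : Matrix.trace (ρ * (Bᴴ * B)) = Matrix.trace (B * ρ * Bᴴ) := by
    rw [← Matrix.mul_assoc, Matrix.trace_mul_cycle]
  have hA0 : 0 ≤ Matrix.trace (A * ρ * Aᴴ) := psd_trace_nonneg (hρ.mul_mul_conjTranspose_same A)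
  have hB0 : 0 ≤ Matrix.trace (B * ρ * Bᴴ) := psd_trace_nonneg (hρ.mul_mul_conjTranspose_same B)
  obtain ⟨ha, hai⟩ := Complex.nonneg_iff.mp hA0
  obtain ⟨hb, hbi⟩ := Complex.nonneg_iff.mp hB0
  obtain ⟨a, ha0, haeq⟩ : ∃ a : ℝ, 0 ≤ a ∧ Matrix.trace (A * ρ * Aᴴ) = (a : ℂ) :=
    ⟨_, ha, Complex.ext_iff.mpr ⟨by simp, by simp [← hai]⟩⟩
  obtain ⟨b, hb0, hbeq⟩ : ∃ b : ℝ, 0 ≤ b ∧ Matrix.trace (B * ρ * Bᴴ) = (b : ℂ) :=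
    ⟨_, hb, Complex.ext_iff.mpr ⟨by simp, by simp [← hbi]⟩⟩
  refine ⟨2⁻¹ * a + Real.exp (-(β * ω)) * 2⁻¹ * b, ?_, ?_⟩
  · have hexp := (Real.exp_pos (-(β * ω))).le
    have : 0 ≤ Real.exp (-(β * ω)) * 2⁻¹ * b := by positivity
    linarith
  · rw [hid, hAtr, hBtr, haeq, hbeq, hc]
    push_cast
    ring

/-- Negativity of the Lindblad super-operator: for a positive semidefinite `ρ` satisfying
detailed balance `ρS = e^{βω}Sρ`, the quantity `−tr(ρ X† L(X))` is a nonnegative real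
number; consequently, any nonnegative linear combination of such terms also yields a
nonnegative quadratic form `−⟨X, L(X)⟩_β` for every `X`. -/
theorem lindblad_negativity (d : ℕ) (ρ S X : Matrix (Fin d) (Fin d) ℂ)
    (hρ : ρ.PosSemidef) (β ω : ℝ)
    (hKMS : ρ * S = (Real.exp (β * ω) : ℂ) • (S * ρ)) :
    (∃ r : ℝ, 0 ≤ r ∧
      -Matrix.trace (ρ * Xᴴ * lindbladTerm S (Real.exp (-(β * ω))) X) = (r : ℂ)) ∧
    (∀ {ι : Type} [Fintype ι] (h : ι → ℝ) (Sf : ι → Matrix (Fin d) (Fin d) ℂ)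
      (βf ωf : ι → ℝ),
      (∀ a, 0 ≤ h a) →
      (∀ a, ρ * Sf a = (Real.exp (βf a * ωf a) : ℂ) • (Sf a * ρ)) →
      ∀ Y : Matrix (Fin d) (Fin d) ℂ, ∃ r : ℝ, 0 ≤ r ∧
        -Matrix.trace (ρ * Yᴴ *
          ∑ a, (h a : ℂ) • lindbladTerm (Sf a) (Real.exp (-(βf a * ωf a))) Y) = (r : ℂ)) := by
  constructor
  · exact key_term ρ S X hρ β ω hKMS
  · intro ι _ h Sf βf ωf hh hK Y
    choose r hr0 hre using fun a => key_term ρ (Sf a) Y hρ (βf a) (ωf a) (hK a)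
    refine ⟨∑ a, h a * r a, Finset.sum_nonneg fun a _ => mul_nonneg (hh a) (hr0 a), ?_⟩
    have hexp : -Matrix.trace (ρ * Yᴴ *
        ∑ a, (h a : ℂ) • lindbladTerm (Sf a) (Real.exp (-(βf a * ωf a))) Y) =
        ∑ a, (h a : ℂ) * (-Matrix.trace (ρ * Yᴴ *
          lindbladTerm (Sf a) (Real.exp (-(βf a * ωf a))) Y)) := by
      rw [Matrix.mul_sum, trace_sum, ← Finset.sum_neg_distrib]
      refine Finset.sum_congr rfl fun a _ => ?_
      rw [Matrix.mul_smul, trace_smul, smul_eq_mul, neg_mul_eq_mul_neg]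
    have hcast : ((∑ a, h a * r a : ℝ) : ℂ) = ∑ a, (h a : ℂ) * (r a : ℂ) := by push_cast; rfl
    rw [hexp, hcast]
    exact Finset.sum_congr rfl fun a _ => by rw [hre a]
end

section
/- Let ρ, S be d×d complex matrices with ρ Hermitian, and let β, ω be real numbers such that ρ·S = e^{βω}·(S·ρ). Define L(X) = ½(S†·[X,S] + [S†,X]·S) + ½e^{−βω}·(S·[X,S†] + [S,X]·S†). Then L is self-adjoint with respect to the Liouville pairing: for all d×d matrices X and Y, trace(ρ·X†·L(Y)) = trace(ρ·(L(X))†·Y). -/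
open Matrix

/-- Self-adjointness of the Lindblad generator with respect to the Liouville pairing
`⟨A,B⟩_β = tr(ρ A† B)`: under detailed balance `ρS = e^{βω}Sρ`,
`tr(ρ X† L(Y)) = tr(ρ (L(X))† Y)` for all `X`, `Y`. -/
theorem lindblad_self_adjoint (d : ℕ) (ρ S : Matrix (Fin d) (Fin d) ℂ)
    (hρ : ρᴴ = ρ) (β ω : ℝ)
    (hKMS : ρ * S = (Real.exp (β * ω) : ℂ) • (S * ρ)) :
    ∀ X Y : Matrix (Fin d) (Fin d) ℂ,
      Matrix.trace (ρ * Xᴴ * lindbladTerm S (Real.exp (-(β * ω))) Y) =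
        Matrix.trace (ρ * (lindbladTerm S (Real.exp (-(β * ω))) X)ᴴ * Y) := by
  intro X Y
  set e : ℂ := (Real.exp (β * ω) : ℂ) with he
  set c : ℂ := (Real.exp (-(β * ω)) : ℂ) with hc
  have hce : c * e = 1 := by
    rw [he, hc]
    norm_cast
    rw [← Real.exp_add]
    simp
  -- conjugate transpose of KMS
  have hestar : star e = e := by rw [he]; exact Complex.conj_ofReal _
  have hKMS' : Sᴴ * ρ = e • (ρ * Sᴴ) := by
    have := congrArg conjTranspose hKMS
    simpa [conjTranspose_mul, hρ, hestar] using this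
  -- moving lemmas
  have K1' : ∀ A : Matrix (Fin d) (Fin d) ℂ,
      trace (ρ * (S * A)) = e * trace (ρ * (A * S)) := by
    intro A
    rw [← mul_assoc, hKMS, smul_mul_assoc, trace_smul, mul_assoc, trace_mul_comm,
      ← mul_assoc, smul_eq_mul]
  have K2' : ∀ A : Matrix (Fin d) (Fin d) ℂ,
      trace (ρ * (A * Sᴴ)) = e * trace (ρ * (Sᴴ * A)) := by
    intro A
    rw [← mul_assoc, trace_mul_comm, ← mul_assoc, hKMS', smul_mul_assoc, trace_smul,
      mul_assoc, smul_eq_mul]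
  have K1 : ∀ A : Matrix (Fin d) (Fin d) ℂ,
      trace (ρ * (A * S)) = c * trace (ρ * (S * A)) := by
    intro A
    linear_combination (-c) * K1' A - (ρ * (A * S)).trace * hce
  have K2 : ∀ A : Matrix (Fin d) (Fin d) ℂ,
      trace (ρ * (Sᴴ * A)) = c * trace (ρ * (A * Sᴴ)) := by
    intro A
    linear_combination (-c) * K2' A - (ρ * (Sᴴ * A)).trace * hce
  have h1 : trace (ρ * (Xᴴ * (Sᴴ * (Y * S)))) = c * trace (ρ * (S * (Xᴴ * (Sᴴ * Y)))) := by
    rw [show Xᴴ * (Sᴴ * (Y * S)) = Xᴴ * (Sᴴ * Y) * S by noncomm_ring, K1]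
  have h2 : trace (ρ * (Sᴴ * (Xᴴ * (S * Y)))) = c * trace (ρ * (Xᴴ * (S * (Y * Sᴴ)))) := by
    rw [K2, show Xᴴ * (S * Y) * Sᴴ = Xᴴ * (S * (Y * Sᴴ)) by noncomm_ring]
  have h3 : trace (ρ * (Xᴴ * (Y * (Sᴴ * S)))) = trace (ρ * (Sᴴ * (S * (Xᴴ * Y)))) := by
    rw [show Xᴴ * (Y * (Sᴴ * S)) = Xᴴ * Y * Sᴴ * S by noncomm_ring, K1,
      K2, show S * (Xᴴ * Y) * Sᴴ = S * (Xᴴ * Y * Sᴴ) by noncomm_ring]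
  have h4 : trace (ρ * (Xᴴ * (Y * (S * Sᴴ)))) = trace (ρ * (S * (Sᴴ * (Xᴴ * Y)))) := by
    rw [show Xᴴ * (Y * (S * Sᴴ)) = Xᴴ * Y * S * Sᴴ by noncomm_ring, K2',
      K1', show Sᴴ * (Xᴴ * Y) * S = Sᴴ * (Xᴴ * Y * S) by noncomm_ring]
  have hcstar : (starRingEnd ℂ) c = c := by rw [hc]; exact Complex.conj_ofReal _
  simp only [lindbladTerm, conjTranspose_add, conjTranspose_smul, conjTranspose_mul,
    conjTranspose_sub, conjTranspose_conjTranspose, Matrix.mul_add, Matrix.add_mul,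
    Matrix.mul_sub, Matrix.sub_mul, Matrix.smul_mul, Matrix.mul_smul, trace_add, trace_sub,
    trace_smul, mul_assoc, smul_eq_mul, smul_sub, smul_add, star_mul', star_inv₀,
    Complex.star_def, Complex.conj_ofReal, map_ofNat, hcstar]
  linear_combination h1 - h2 - (1/2) * h3 - (c/2) * h4
end

section
/- Let V be a finite-dimensional complex inner product space, let L : V → V be a self-adjoint linear map with re⟨Y, L Y⟩ ≤ 0 for all Y ∈ V, and let X ∈ V be nonzero with −re⟨X, L X⟩ ≤ ε·⟨X, X⟩ for some ε ≥ 0. Then for every real t ≥ 0, re⟨X, exp(t·L) X⟩ ≥ e^{−εt}·⟨X, X⟩. -/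
open scoped Nat in
open NormedSpace in
lemma exp_apply_eigenvector {V : Type*} [NormedAddCommGroup V] [NormedSpace ℂ V]
    [CompleteSpace V] (A : V →L[ℂ] V) (v : V) (c : ℂ) (h : A v = c • v) :
    NormedSpace.exp A v = Complex.exp c • v := by
  have hpow : ∀ n : ℕ, (A ^ n) v = c ^ n • v := by
    intro n
    induction n with
    | zero => simp
    | succ n ih =>
      rw [pow_succ, ContinuousLinearMap.mul_apply, h, map_smul, ih, smul_smul, pow_succ,
        mul_comm]
  have hs : Summable fun n : ℕ => (n !⁻¹ : ℂ) • A ^ n := expSeries_summable' A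
  have := (ContinuousLinearMap.apply ℂ V v).map_tsum hs
  rw [NormedSpace.exp_eq_tsum (𝕂 := ℂ)]
  simp only [ContinuousLinearMap.apply_apply] at this
  rw [this]
  simp only [ContinuousLinearMap.smul_apply, hpow, smul_smul]
  have hs2 : Summable fun n : ℕ => (n !⁻¹ : ℂ) * c ^ n := by
    simpa [smul_eq_mul] using NormedSpace.expSeries_summable' (𝕂 := ℂ) c
  rw [hs2.tsum_smul_const, Complex.exp_eq_exp_ℂ, NormedSpace.exp_eq_tsum (𝕂 := ℂ)]
  simp [smul_eq_mul]

lemma jensen_exp_aux {ι : Type*} [Fintype ι] (p μ : ι → ℝ) (hp : ∀ i, 0 ≤ p i)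
    (S : ℝ) (hS : 0 < S) (hsum : ∑ i, p i = S) (ε t : ℝ) (ht : 0 ≤ t)
    (hgap : -(∑ i, μ i * p i) ≤ ε * S) :
    Real.exp (-(ε * t)) * S ≤ ∑ i, Real.exp (t * μ i) * p i := by
  set w : ι → ℝ := fun i => p i / S with hw
  have hw0 : ∀ i ∈ Finset.univ, (0:ℝ) ≤ w i := fun i _ => div_nonneg (hp i) hS.le
  have hw1 : ∑ i : ι, w i = 1 := by
    simp only [hw, ← Finset.sum_div, hsum, div_self hS.ne']
  have hmem : ∀ i ∈ Finset.univ, (t * μ i) ∈ (Set.univ : Set ℝ) := fun _ _ => trivial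
  have hjen := convexOn_exp.map_sum_le hw0 hw1 hmem
  have h1 : -(ε * t) ≤ ∑ i, w i • (t * μ i) := by
    have heq : ∑ i, w i • (t * μ i) = t / S * ∑ i, μ i * p i := by
      rw [Finset.mul_sum]
      refine Finset.sum_congr rfl fun i _ => ?_
      simp only [hw, smul_eq_mul]
      ring
    rw [heq]
    have h2 : -(ε * S) ≤ ∑ i, μ i * p i := by linarith
    have ht' : 0 ≤ t / S := div_nonneg ht hS.le
    calc -(ε * t) = t / S * (-(ε * S)) := by field_simp
      _ ≤ t / S * ∑ i, μ i * p i := mul_le_mul_of_nonneg_left h2 ht'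
  have key : Real.exp (-(ε * t)) ≤ (∑ i, Real.exp (t * μ i) * p i) / S := by
    calc Real.exp (-(ε * t)) ≤ Real.exp (∑ i, w i • (t * μ i)) := Real.exp_le_exp.2 h1
      _ ≤ ∑ i, w i • Real.exp (t * μ i) := hjen
      _ = (∑ i, Real.exp (t * μ i) * p i) / S := by
          rw [Finset.sum_div]
          refine Finset.sum_congr rfl fun i _ => ?_
          simp only [hw, smul_eq_mul]
          ring
  calc Real.exp (-(ε * t)) * S ≤ (∑ i, Real.exp (t * μ i) * p i) / S * S :=
        mul_le_mul_of_nonneg_right key hS.le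
    _ = ∑ i, Real.exp (t * μ i) * p i := div_mul_cancel₀ _ hS.ne'

/-- Stability criterion: if the self-adjoint generator `L` is negative and the nonzero
observable `X` satisfies `−re⟨X, L X⟩ ≤ ε⟨X, X⟩`, then its auto-correlation function does
not decay faster than `e^{−εt}`: `re⟨X, e^{tL} X⟩ ≥ e^{−εt}⟨X, X⟩` for all `t ≥ 0`. -/
theorem autocorrelation_lower_bound {V : Type*} [NormedAddCommGroup V]
    [InnerProductSpace ℂ V] [FiniteDimensional ℂ V]
    (L : V →L[ℂ] V)
    (hsa : ∀ x y : V, (inner ℂ (L x) y : ℂ) = inner ℂ x (L y))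
    (hneg : ∀ Y : V, (inner ℂ Y (L Y) : ℂ).re ≤ 0)
    (X : V) (hX : X ≠ 0) (ε : ℝ) (hε : 0 ≤ ε)
    (hgap : -(inner ℂ X (L X) : ℂ).re ≤ ε * (inner ℂ X X : ℂ).re) :
    ∀ t : ℝ, 0 ≤ t →
      Real.exp (-(ε * t)) * (inner ℂ X X : ℂ).re ≤
        (inner ℂ X (NormedSpace.exp (t • L) X) : ℂ).re := by
  intro t ht
  have hsym : LinearMap.IsSymmetric (↑L : V →ₗ[ℂ] V) := fun x y => hsa x y
  set n := Module.finrank ℂ V with hn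
  let b := hsym.eigenvectorBasis rfl
  let μ : Fin n → ℝ := hsym.eigenvalues rfl
  let c : Fin n → ℂ := fun i => b.repr X i
  have hXsum : X = ∑ i, c i • b i := (b.sum_repr X).symm
  have hinner : ∀ d : Fin n → ℂ,
      (inner ℂ X (∑ i, d i • b i) : ℂ) = ∑ i, d i * (starRingEnd ℂ) (c i) := by
    intro d
    rw [inner_sum]
    refine Finset.sum_congr rfl fun i _ => ?_
    rw [inner_smul_right]
    congr 1
    rw [← inner_conj_symm]
    congr 1
    exact (b.repr_apply_apply X i).symm
  have hb : ∀ i, L (b i) = (μ i : ℂ) • b i := fun i =>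
    hsym.apply_eigenvectorBasis rfl i
  -- inner X X
  have hXX : (inner ℂ X X : ℂ).re = ∑ i, Complex.normSq (c i) := by
    nth_rewrite 2 [hXsum]
    rw [hinner, Complex.re_sum]
    refine Finset.sum_congr rfl fun i _ => ?_
    rw [Complex.mul_conj, Complex.ofReal_re]
  -- inner X (L X)
  have hLX : (inner ℂ X (L X) : ℂ).re = ∑ i, μ i * Complex.normSq (c i) := by
    have hL : L X = ∑ i, ((μ i : ℂ) * c i) • b i := by
      conv_lhs => rw [hXsum]
      rw [map_sum]
      refine Finset.sum_congr rfl fun i _ => ?_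
      rw [map_smul, hb i, smul_smul, mul_comm]
    rw [hL, hinner, Complex.re_sum]
    refine Finset.sum_congr rfl fun i _ => ?_
    rw [mul_assoc, Complex.mul_conj, ← Complex.ofReal_mul, Complex.ofReal_re]
  -- exp
  have hexp : (inner ℂ X (NormedSpace.exp (t • L) X) : ℂ).re
      = ∑ i, Real.exp (t * μ i) * Complex.normSq (c i) := by
    have hE : NormedSpace.exp (t • L) X
        = ∑ i, ((Real.exp (t * μ i) : ℂ) * c i) • b i := by
      conv_lhs => rw [hXsum]
      rw [map_sum]
      refine Finset.sum_congr rfl fun i _ => ?_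
      rw [map_smul]
      have heig : (t • L) (b i) = ((t : ℂ) * (μ i : ℂ)) • b i := by
        rw [ContinuousLinearMap.smul_apply, hb i, mul_smul, ← Complex.coe_algebraMap]
        simp only [algebraMap_smul]
      rw [exp_apply_eigenvector (t • L) (b i) _ heig, ← Complex.ofReal_mul,
        Complex.ofReal_exp, smul_smul, mul_comm]
    rw [hE, hinner, Complex.re_sum]
    refine Finset.sum_congr rfl fun i _ => ?_
    rw [mul_assoc, Complex.mul_conj, ← Complex.ofReal_mul, Complex.ofReal_re]
  have hS : 0 < ∑ i, Complex.normSq (c i) := by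
    rw [← hXX]
    have h := inner_self_eq_norm_sq (𝕜 := ℂ) X
    rw [RCLike.re_to_complex] at h
    rw [h]
    have : 0 < ‖X‖ := norm_pos_iff.2 hX
    positivity
  rw [hXX, hexp]
  exact jensen_exp_aux (fun i => Complex.normSq (c i)) μ
    (fun i => Complex.normSq_nonneg _) _ hS rfl ε t ht
    (by rw [hLX, hXX] at hgap; exact hgap)
end
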